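/- arXiv:2603.29970 — 2 statements merged into one kernel-verified Lean document; each statement's English description precedes it below -/
import Mathlib

section
/- Assume the abc Conjecture. Then for every real η > 0 there exists a constant C > 0 such that for all real X ≥ 2, the total number of pairs (x, y) of integers with x ≥ 1 and 1 ≤ |x^11 − y^2| ≤ X is at most C · (X^(13/22) + X^(4/9 + η)). -/
open Real

/-- The radical of a natural number: the product of its distinct prime factors. -/
def rad (n : ℕ) : ℕ := ∏ p ∈ n.primeFactors, p


lemma step_ineq {t : ℝ} (ht : 2 ≤ t) :
    t ^ (-(11:ℝ)/2) ≤ (2/9) * ((t-1) ^ (-(9:ℝ)/2) - t ^ (-(9:ℝ)/2)) := by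
  have ht0 : (0:ℝ) < t := by linarith
  have hu0 : (0:ℝ) < t - 1 := by linarith
  have hb : 1 + (9/2 : ℝ) * (1/(t-1)) ≤ (1 + 1/(t-1)) ^ ((9:ℝ)/2) :=
    one_add_mul_self_le_rpow_one_add
      (le_trans (by norm_num : (-1:ℝ) ≤ 0) (by positivity)) (by norm_num)
  have h2 : (1 : ℝ) + 1/(t-1) = t/(t-1) := by field_simp; ring
  rw [h2, Real.div_rpow ht0.le hu0.le] at hb
  set A := t ^ ((9:ℝ)/2) with hA
  set B := (t-1) ^ ((9:ℝ)/2) with hB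
  have hApos : 0 < A := rpow_pos_of_pos ht0 _
  have hBpos : 0 < B := rpow_pos_of_pos hu0 _
  have hb' : (1 + (9/2) / t) * B ≤ A := by
    have h1 : (1:ℝ) + (9/2)/t ≤ 1 + (9/2) * (1/(t-1)) := by
      have : (9/2:ℝ)/t ≤ (9/2)/(t-1) :=
        div_le_div_of_nonneg_left (by norm_num) hu0 (by linarith)
      rw [mul_one_div]; linarith
    calc (1 + (9/2)/t) * B ≤ (1 + (9/2)*(1/(t-1))) * B := by nlinarith
      _ ≤ (A/B) * B := by nlinarith
      _ = A := by field_simp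
  have key : (9/2) * B + t * B ≤ t * A := by
    have h5 := mul_le_mul_of_nonneg_left hb' ht0.le
    have h6 : t * ((1 + 9/2/t) * B) = t * B + 9/2 * B := by field_simp
    linarith [h6 ▸ h5]
  have e1 : t ^ (-(9:ℝ)/2) = 1 / A := by
    rw [hA, show (-(9:ℝ)/2) = -(9/2) by norm_num, Real.rpow_neg ht0.le, one_div]
  have e2 : (t-1) ^ (-(9:ℝ)/2) = 1 / B := by
    rw [hB, show (-(9:ℝ)/2) = -(9/2) by norm_num, Real.rpow_neg hu0.le, one_div]
  have e3 : t ^ (-(11:ℝ)/2) = 1 / (t * A) := by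
    rw [hA, show (-(11:ℝ)/2) = -(11/2) by norm_num, Real.rpow_neg ht0.le, one_div]
    congr 1
    rw [show (11:ℝ)/2 = 1 + 9/2 by norm_num, Real.rpow_add ht0, Real.rpow_one]
  rw [e1, e2, e3]
  have h4 : 1/B - 1/A = (A - B)/(A*B) := by
    rw [div_sub_div _ _ hBpos.ne' hApos.ne', one_mul, mul_one, mul_comm]
  rw [h4, show (2/9 : ℝ) * ((A - B)/(A*B)) = (2*(A-B))/(9*(A*B)) by ring,
    div_le_div_iff₀ (by positivity) (by positivity)]
  nlinarith

lemma sum_rpow_le {a : ℤ} (ha : 2 ≤ a) (b : ℤ) :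
    ∑ x ∈ Finset.Icc a b, ((x:ℝ) ^ (-(11:ℝ)/2)) ≤ (2/9) * ((a:ℝ) - 1) ^ (-(9:ℝ)/2) := by
  rcases le_or_gt a b with hab | hab
  · have main : ∀ b : ℤ, a ≤ b → ∑ x ∈ Finset.Icc a b, ((x:ℝ) ^ (-(11:ℝ)/2))
        ≤ (2/9) * (((a:ℝ) - 1) ^ (-(9:ℝ)/2) - (b:ℝ) ^ (-(9:ℝ)/2)) := by
      refine Int.le_induction ?_ ?_
      · rw [Finset.Icc_self, Finset.sum_singleton]
        have := step_ineq (t := (a:ℝ)) (by exact_mod_cast ha)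
        linarith
      · intro n hn ih
        have hins : Finset.Icc a (n+1) = insert (n+1) (Finset.Icc a n) := by
          ext k; simp only [Finset.mem_Icc, Finset.mem_insert]; omega
        rw [hins, Finset.sum_insert (by simp only [Finset.mem_Icc]; omega)]
        have ha2 : (2:ℝ) ≤ (a:ℝ) := by exact_mod_cast ha
        have han : (a:ℝ) ≤ (n:ℝ) := by exact_mod_cast hn
        have hst := step_ineq (t := ((n:ℝ) + 1)) (by linarith)
        push_cast
        have h7 : ((n:ℝ) + 1 - 1) = (n:ℝ) := by ring
        rw [h7] at hst
        linarith
    have h := main b hab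
    have hpos : 0 ≤ (b:ℝ) ^ (-(9:ℝ)/2) := by
      apply Real.rpow_nonneg
      have h1 : (2:ℝ) ≤ (a:ℝ) := by exact_mod_cast ha
      have h2 : (a:ℝ) ≤ (b:ℝ) := by exact_mod_cast hab
      linarith
    linarith
  · rw [Finset.Icc_eq_empty (by omega), Finset.sum_empty]
    have : (0:ℝ) < (a:ℝ) - 1 := by
      have : (2:ℝ) ≤ (a:ℝ) := by exact_mod_cast ha
      linarith
    positivity



lemma rad_pos (n : ℕ) : 0 < rad n :=
  Finset.prod_pos fun _ hp => (Nat.prime_of_mem_primeFactors hp).pos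

lemma rad_le_self {n : ℕ} (hn : n ≠ 0) : rad n ≤ n :=
  Nat.le_of_dvd (Nat.pos_of_ne_zero hn) (Nat.prod_primeFactors_dvd n)

lemma rad_dvd_rad {m n : ℕ} (h : m ∣ n) (hn : n ≠ 0) : rad m ∣ rad n :=
  Finset.prod_dvd_prod_of_subset _ _ _ (Nat.primeFactors_mono h hn)

lemma rad_le_rad {m n : ℕ} (h : m ∣ n) (hn : n ≠ 0) : rad m ≤ rad n :=
  Nat.le_of_dvd (rad_pos n) (rad_dvd_rad h hn)

lemma rad_mul_le (m n : ℕ) (hm : m ≠ 0) (hn : n ≠ 0) : rad (m * n) ≤ rad m * rad n := by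
  unfold rad
  rw [Nat.primeFactors_mul hm hn]
  calc (∏ p ∈ m.primeFactors ∪ n.primeFactors, p)
      ≤ (∏ p ∈ m.primeFactors ∪ n.primeFactors, p) * ∏ p ∈ m.primeFactors ∩ n.primeFactors, p :=
        Nat.le_mul_of_pos_right _ (Finset.prod_pos fun p hp =>
          (Nat.prime_of_mem_primeFactors (Finset.mem_of_mem_inter_left hp)).pos)
    _ = (∏ p ∈ m.primeFactors, p) * ∏ p ∈ n.primeFactors, p := Finset.prod_union_inter

lemma rad_pow (k n : ℕ) (hn : n ≠ 0) : rad (k ^ n) = rad k := by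
  unfold rad
  rw [Nat.primeFactors_pow _ hn]

lemma abc_x_bound (C ε X : ℝ) (hC : 0 < C) (hε : 0 < ε) (hε3 : ε ≤ 1/3)
    (habc' : ∀ a b c : ℤ, a ≠ 0 → b ≠ 0 → c ≠ 0 → IsCoprime a b → a + b = c →
      ((|c| : ℤ) : ℝ) ≤ C * (rad (a * b * c).natAbs : ℝ) ^ (1 + ε))
    (hX : 2 ≤ X) (x y : ℤ) (hx : 1 ≤ x)
    (h3X : 3 * X < ((x:ℝ)) ^ (11:ℕ))
    (hd1 : 1 ≤ |x ^ 11 - y ^ 2|)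
    (hd2 : ((|x ^ 11 - y ^ 2| : ℤ) : ℝ) ≤ X) :
    (x:ℝ) ^ ((9 - 13*ε)/2 : ℝ) ≤ 4 * C * X ^ ((2:ℝ) + ε) := by
  have hx0 : (0:ℤ) < x := hx
  have hx0R : (0:ℝ) < (x:ℝ) := by exact_mod_cast hx0
  have hx1R : (1:ℝ) ≤ (x:ℝ) := by exact_mod_cast hx
  have hXpos : (0:ℝ) < X := by linarith
  set d : ℤ := x ^ 11 - y ^ 2 with hd_def
  have hd0 : d ≠ 0 := by
    intro h; rw [h] at hd1; simp at hd1
  have hdX : |(d:ℝ)| ≤ X := by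
    rw [← Int.cast_abs]; exact_mod_cast hd2
  have hdR : (d:ℝ) = (x:ℝ)^(11:ℕ) - (y:ℝ)^(2:ℕ) := by push_cast [hd_def]; ring
  have hy0 : y ≠ 0 := by
    intro h
    rw [h] at hdR; simp at hdR
    rw [hdR] at hdX
    rw [abs_of_pos (by positivity)] at hdX
    linarith
  have hx11 : (0:ℤ) < x ^ 11 := by positivity
  -- gcd setup
  set g : ℕ := Int.gcd (x^11) (y^2) with hg_def
  have hgpos : 0 < g := Int.gcd_pos_iff.mpr (Or.inl hx11.ne')
  have hgZ : (0:ℤ) < (g:ℤ) := by exact_mod_cast hgpos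
  have hgx : (g:ℤ) ∣ x^11 := Int.gcd_dvd_left _ _
  have hgy : (g:ℤ) ∣ y^2 := Int.gcd_dvd_right _ _
  have hgd : (g:ℤ) ∣ d := dvd_sub hgx hgy
  obtain ⟨c, hc⟩ := hgx
  obtain ⟨a, ha⟩ := hgy
  obtain ⟨b, hb⟩ := hgd
  have hsum : a + b = c := by
    have h1 : (g:ℤ) * (a + b) = (g:ℤ) * c := by
      rw [mul_add, ← ha, ← hb, ← hc, hd_def]; ring
    exact mul_left_cancel₀ hgZ.ne' h1
  have ha0 : a ≠ 0 := by
    intro h; rw [h, mul_zero] at ha; exact pow_ne_zero 2 hy0 ha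
  have hb0 : b ≠ 0 := by
    intro h; rw [h, mul_zero] at hb; exact hd0 hb
  have hc0 : c ≠ 0 := by
    intro h; rw [h, mul_zero] at hc; exact hx11.ne' hc
  have hcpos : 0 < c := by
    rcases lt_trichotomy c 0 with h | h | h
    · exfalso; nlinarith [hc, hx11]
    · exact absurd h hc0
    · exact h
  -- coprimality
  have hcdiv : x^11 / (g:ℤ) = c := by rw [hc]; exact Int.mul_ediv_cancel_left _ hgZ.ne'
  have hadiv : y^2 / (g:ℤ) = a := by rw [ha]; exact Int.mul_ediv_cancel_left _ hgZ.ne'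
  have hcop_ca : IsCoprime c a := by
    rw [Int.isCoprime_iff_gcd_eq_one, ← hcdiv, ← hadiv]
    exact Int.gcd_div_gcd_div_gcd hgpos
  have hcop_ab : IsCoprime a b := by
    have h1 : IsCoprime a (c + a * (-1)) := hcop_ca.symm.add_mul_left_right (-1)
    have h2 : c + a * (-1) = b := by linarith [hsum]
    rwa [h2] at h1
  have habc_ineq := habc' a b c ha0 hb0 hc0 hcop_ab hsum
  -- radical bound (ℕ side)
  have haN : a.natAbs ≠ 0 := Int.natAbs_ne_zero.mpr ha0
  have hbN : b.natAbs ≠ 0 := Int.natAbs_ne_zero.mpr hb0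
  have hcN : c.natAbs ≠ 0 := Int.natAbs_ne_zero.mpr hc0
  have hyN : y.natAbs ≠ 0 := Int.natAbs_ne_zero.mpr hy0
  have hxN : x.natAbs ≠ 0 := Int.natAbs_ne_zero.mpr hx0.ne'
  have hdN : d.natAbs ≠ 0 := Int.natAbs_ne_zero.mpr hd0
  have hrad_a : rad a.natAbs ≤ y.natAbs := by
    have h1 : a ∣ y^2 := ⟨g, by rw [ha]; ring⟩
    have h2 : a.natAbs ∣ y.natAbs ^ 2 := by
      rw [show y.natAbs ^ 2 = (y^2).natAbs by rw [Int.natAbs_pow]]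
      exact Int.natAbs_dvd_natAbs.mpr h1
    calc rad a.natAbs ≤ rad (y.natAbs ^ 2) := rad_le_rad h2 (pow_ne_zero 2 hyN)
      _ = rad y.natAbs := rad_pow _ 2 (by norm_num)
      _ ≤ y.natAbs := rad_le_self hyN
  have hrad_c : rad c.natAbs ≤ x.natAbs := by
    have h1 : c ∣ x^11 := ⟨g, by rw [hc]; ring⟩
    have h2 : c.natAbs ∣ x.natAbs ^ 11 := by
      rw [show x.natAbs ^ 11 = (x^11).natAbs by rw [Int.natAbs_pow]]
      exact Int.natAbs_dvd_natAbs.mpr h1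
    calc rad c.natAbs ≤ rad (x.natAbs ^ 11) := rad_le_rad h2 (pow_ne_zero 11 hxN)
      _ = rad x.natAbs := rad_pow _ 11 (by norm_num)
      _ ≤ x.natAbs := rad_le_self hxN
  have hrad_b : rad b.natAbs ≤ d.natAbs := by
    have h1 : b ∣ d := ⟨g, by rw [hb]; ring⟩
    calc rad b.natAbs ≤ b.natAbs := rad_le_self hbN
      _ ≤ d.natAbs := Nat.le_of_dvd (Nat.pos_of_ne_zero hdN) (Int.natAbs_dvd_natAbs.mpr h1)
  have hrad : rad (a*b*c).natAbs ≤ y.natAbs * d.natAbs * x.natAbs := by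
    have e : (a*b*c).natAbs = a.natAbs * b.natAbs * c.natAbs := by
      rw [Int.natAbs_mul, Int.natAbs_mul]
    rw [e]
    calc rad (a.natAbs * b.natAbs * c.natAbs)
        ≤ rad (a.natAbs * b.natAbs) * rad c.natAbs :=
          rad_mul_le _ _ (Nat.mul_ne_zero haN hbN) hcN
      _ ≤ (rad a.natAbs * rad b.natAbs) * rad c.natAbs :=
          Nat.mul_le_mul_right _ (rad_mul_le _ _ haN hbN)
      _ ≤ (y.natAbs * d.natAbs) * x.natAbs := by
          exact Nat.mul_le_mul (Nat.mul_le_mul hrad_a hrad_b) hrad_c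
  -- real side
  have hy2 : (y:ℝ)^(2:ℕ) ≤ 2 * (x:ℝ)^(11:ℕ) := by
    have := abs_le.mp hdX
    rw [hdR] at this
    linarith [this.1]
  have hhalfsq : ((x:ℝ) ^ ((11:ℝ)/2)) ^ (2:ℕ) = (x:ℝ)^(11:ℕ) := by
    rw [← Real.rpow_natCast ((x:ℝ) ^ ((11:ℝ)/2)) 2, ← Real.rpow_mul hx0R.le,
      ← Real.rpow_natCast (x:ℝ) 11]
    norm_num
  have habs_y : |(y:ℝ)| ≤ Real.sqrt 2 * (x:ℝ)^((11:ℝ)/2) := by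
    rw [← Real.sqrt_sq_eq_abs]
    have h1 : Real.sqrt ((y:ℝ)^2) ≤ Real.sqrt (2 * (x:ℝ)^(11:ℕ)) :=
      Real.sqrt_le_sqrt (by exact_mod_cast hy2)
    calc Real.sqrt ((y:ℝ)^2) ≤ Real.sqrt (2 * (x:ℝ)^(11:ℕ)) := h1
      _ = Real.sqrt 2 * Real.sqrt ((x:ℝ)^(11:ℕ)) := Real.sqrt_mul (by norm_num) _
      _ = Real.sqrt 2 * (x:ℝ)^((11:ℝ)/2) := by
          rw [← hhalfsq, Real.sqrt_sq (by positivity)]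
  -- assemble
  have hgled : (g:ℤ) ≤ |d| := Int.le_of_dvd (abs_pos.mpr hd0) ((dvd_abs _ _).mpr ⟨b, hb⟩)
  have hgR : (g:ℝ) ≤ X := by
    have : ((g:ℤ):ℝ) ≤ ((|d|:ℤ):ℝ) := by exact_mod_cast hgled
    rw [Int.cast_abs] at this
    push_cast at this ⊢
    linarith [hdX]
  have hcR : (0:ℝ) < (c:ℝ) := by exact_mod_cast hcpos
  have hstep1 : (x:ℝ)^(11:ℕ) ≤ X * (c:ℝ) := by
    have h1 : ((x:ℝ))^(11:ℕ) = (g:ℝ) * (c:ℝ) := by exact_mod_cast congrArg (Int.cast : ℤ → ℝ) hc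
    rw [h1]
    exact mul_le_mul_of_nonneg_right hgR hcR.le
  have habs_c : ((|c|:ℤ):ℝ) = (c:ℝ) := by
    rw [abs_of_pos hcpos]
  rw [habs_c] at habc_ineq
  -- bound the radical real value
  have hradR : ((rad (a*b*c).natAbs : ℕ):ℝ) ≤ Real.sqrt 2 * (x:ℝ)^((11:ℝ)/2) * X * (x:ℝ) := by
    have h1 : ((rad (a*b*c).natAbs : ℕ):ℝ) ≤ ((y.natAbs * d.natAbs * x.natAbs : ℕ):ℝ) := by
      exact_mod_cast hrad
    have h2 : ((y.natAbs * d.natAbs * x.natAbs : ℕ):ℝ) = |(y:ℝ)| * |(d:ℝ)| * (x:ℝ) := by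
      push_cast [Nat.cast_natAbs]
      rw [abs_of_pos hx0R]
    rw [h2] at h1
    calc ((rad (a*b*c).natAbs : ℕ):ℝ) ≤ |(y:ℝ)| * |(d:ℝ)| * (x:ℝ) := h1
      _ ≤ (Real.sqrt 2 * (x:ℝ)^((11:ℝ)/2)) * X * (x:ℝ) := by
          apply mul_le_mul_of_nonneg_right _ hx0R.le
          exact mul_le_mul habs_y hdX (abs_nonneg _) (by positivity)
      _ = Real.sqrt 2 * (x:ℝ)^((11:ℝ)/2) * X * (x:ℝ) := by ring
  -- combine
  set R := ((rad (a*b*c).natAbs : ℕ):ℝ) with hR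
  set P := (x:ℝ) ^ ((13*(1+ε))/2 : ℝ) with hP
  have hPpos : 0 < P := rpow_pos_of_pos hx0R _
  have h1ε : (0:ℝ) ≤ 1 + ε := by linarith
  have hsqrt2 : Real.sqrt 2 ≤ 2 := by
    nlinarith [Real.sq_sqrt (by norm_num : (0:ℝ) ≤ 2), Real.sqrt_nonneg 2]
  have hx1312 : (x:ℝ)^((11:ℝ)/2) * (x:ℝ) = (x:ℝ)^((13:ℝ)/2) := by
    nth_rewrite 2 [← Real.rpow_one (x:ℝ)]
    rw [← Real.rpow_add hx0R]
    norm_num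
  have hB0B1 : Real.sqrt 2 * (x:ℝ)^((11:ℝ)/2) * X * (x:ℝ) ≤ 2 * (x:ℝ)^((13:ℝ)/2) * X := by
    have h1 : Real.sqrt 2 * (x:ℝ)^((11:ℝ)/2) * X * (x:ℝ)
        = (Real.sqrt 2) * ((x:ℝ)^((11:ℝ)/2) * (x:ℝ)) * X := by ring
    rw [h1, hx1312]
    have h2 : (0:ℝ) ≤ (x:ℝ)^((13:ℝ)/2) * X := by positivity
    calc Real.sqrt 2 * (x:ℝ)^((13:ℝ)/2) * X = Real.sqrt 2 * ((x:ℝ)^((13:ℝ)/2) * X) := by ring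
      _ ≤ 2 * ((x:ℝ)^((13:ℝ)/2) * X) := mul_le_mul_of_nonneg_right hsqrt2 h2
      _ = 2 * (x:ℝ)^((13:ℝ)/2) * X := by ring
  have hrpow1 : R ^ ((1:ℝ)+ε) ≤ (2 * (x:ℝ)^((13:ℝ)/2) * X) ^ ((1:ℝ)+ε) := by
    apply Real.rpow_le_rpow (by rw [hR]; positivity) _ h1ε
    exact le_trans hradR hB0B1
  have hPx : ((x:ℝ)^((13:ℝ)/2)) ^ ((1:ℝ)+ε) = P := by
    rw [hP, ← Real.rpow_mul hx0R.le]
    congr 1; ring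
  have htwo : (2:ℝ) ^ ((1:ℝ)+ε) ≤ 4 := by
    calc (2:ℝ) ^ ((1:ℝ)+ε) ≤ (2:ℝ) ^ (2:ℝ) :=
          Real.rpow_le_rpow_of_exponent_le one_le_two (by linarith)
      _ = 4 := by
          have h9 : ((2:ℕ):ℝ) = (2:ℝ) := by norm_num
          rw [← h9, Real.rpow_natCast]
          norm_num
  have hexpand : (2 * (x:ℝ)^((13:ℝ)/2) * X) ^ ((1:ℝ)+ε) ≤ 4 * P * X ^ ((1:ℝ)+ε) := by
    rw [Real.mul_rpow (by positivity) hXpos.le, Real.mul_rpow (by norm_num) (by positivity),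
      hPx]
    have hXr : (0:ℝ) ≤ X ^ ((1:ℝ)+ε) := by positivity
    exact mul_le_mul_of_nonneg_right (mul_le_mul_of_nonneg_right htwo hPpos.le) hXr
  have hfinal : (x:ℝ)^(11:ℕ) ≤ 4*C * P * X^((2:ℝ)+ε) := by
    have hXsplit : X * X ^ ((1:ℝ)+ε) = X ^ ((2:ℝ)+ε) := by
      nth_rewrite 1 [← Real.rpow_one X]
      rw [← Real.rpow_add hXpos]
      congr 1; ring
    calc (x:ℝ)^(11:ℕ) ≤ X * (c:ℝ) := hstep1
      _ ≤ X * (C * R ^ ((1:ℝ)+ε)) := by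
          apply mul_le_mul_of_nonneg_left _ hXpos.le
          exact_mod_cast habc_ineq
      _ ≤ X * (C * (4 * P * X ^ ((1:ℝ)+ε))) := by
          apply mul_le_mul_of_nonneg_left _ hXpos.le
          exact mul_le_mul_of_nonneg_left (le_trans hrpow1 hexpand) hC.le
      _ = 4*C * P * (X * X ^ ((1:ℝ)+ε)) := by ring
      _ = 4*C * P * X^((2:ℝ)+ε) := by rw [hXsplit]
  have hsplit : (x:ℝ)^(11:ℕ) = (x:ℝ)^((9-13*ε)/2 : ℝ) * P := by
    rw [hP, ← Real.rpow_add hx0R, ← Real.rpow_natCast (x:ℝ) 11]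
    congr 1
    push_cast; ring
  rw [hsplit] at hfinal
  have hfinal2 : (x:ℝ)^((9-13*ε)/2 : ℝ) * P ≤ (4 * C * X ^ ((2:ℝ)+ε)) * P := by
    calc (x:ℝ)^((9-13*ε)/2 : ℝ) * P ≤ 4*C * P * X^((2:ℝ)+ε) := hfinal
      _ = (4 * C * X ^ ((2:ℝ)+ε)) * P := by ring
  exact le_of_mul_le_mul_right hfinal2 hPpos


lemma convert_bound (C η X : ℝ) (hC : 0 < C) (hη : 0 < η) (hX : 2 ≤ X)
    (x : ℤ) (hx : 1 ≤ x)
    (h : (x:ℝ) ^ ((9 - 13*(min η 1 / 3))/2 : ℝ) ≤ 4 * C * X ^ ((2:ℝ) + (min η 1 / 3))) :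
    (x:ℝ) ≤ (4*C+1) * X ^ ((4:ℝ)/9 + η) := by
  set ε := min η 1 / 3 with hεd
  have hε0 : 0 < ε := by
    have : 0 < min η 1 := lt_min hη one_pos
    positivity
  have hε3 : ε ≤ 1/3 := by
    have : min η 1 ≤ 1 := min_le_right _ _
    rw [hεd]; linarith
  set β : ℝ := (9 - 13*ε)/2 with hβd
  have hβpos : 0 < β := by rw [hβd]; linarith
  have hβ1 : 1 ≤ β := by rw [hβd]; linarith
  have hx0R : (0:ℝ) < (x:ℝ) := by exact_mod_cast hx
  have hXpos : (0:ℝ) < X := by linarith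
  have hX1 : (1:ℝ) ≤ X := by linarith
  have hxeq : (x:ℝ) = ((x:ℝ) ^ β) ^ (1/β : ℝ) := by
    rw [← Real.rpow_mul hx0R.le, mul_one_div, div_self hβpos.ne', Real.rpow_one]
  have hmono : ((x:ℝ) ^ β) ^ (1/β : ℝ) ≤ (4 * C * X ^ ((2:ℝ) + ε)) ^ (1/β : ℝ) :=
    Real.rpow_le_rpow (by positivity) h (by positivity)
  have hsplit : (4 * C * X ^ ((2:ℝ) + ε)) ^ (1/β : ℝ)
      = (4*C) ^ (1/β : ℝ) * X ^ (((2:ℝ)+ε)/β) := by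
    rw [Real.mul_rpow (by positivity) (by positivity), ← Real.rpow_mul hXpos.le,
      mul_one_div]
  have hconst : (4*C) ^ (1/β : ℝ) ≤ 4*C+1 := by
    calc (4*C) ^ (1/β : ℝ) ≤ (4*C+1) ^ (1/β : ℝ) :=
          Real.rpow_le_rpow (by positivity) (by linarith) (by positivity)
      _ ≤ (4*C+1) ^ (1:ℝ) :=
          Real.rpow_le_rpow_of_exponent_le (by linarith) (by
            rw [div_le_one hβpos]; linarith)
      _ = 4*C+1 := Real.rpow_one _
  have hexp : ((2:ℝ)+ε)/β ≤ (4:ℝ)/9 + η := by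
    rw [div_le_iff₀ hβpos, hβd]
    rcases le_total η 1 with hc | hc
    · have : ε = η/3 := by rw [hεd, min_eq_left hc]
      rw [this]; nlinarith
    · have : ε = 1/3 := by rw [hεd, min_eq_right hc]
      rw [this]; nlinarith
  have hXexp : X ^ (((2:ℝ)+ε)/β) ≤ X ^ ((4:ℝ)/9 + η) :=
    Real.rpow_le_rpow_of_exponent_le hX1 hexp
  calc (x:ℝ) = ((x:ℝ) ^ β) ^ (1/β : ℝ) := hxeq
    _ ≤ (4 * C * X ^ ((2:ℝ) + ε)) ^ (1/β : ℝ) := hmono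
    _ = (4*C) ^ (1/β : ℝ) * X ^ (((2:ℝ)+ε)/β) := hsplit
    _ ≤ (4*C+1) * X ^ ((4:ℝ)/9 + η) := by
        apply mul_le_mul hconst hXexp (by positivity) (by linarith)

lemma toNat_cast_le {k : ℤ} {r : ℝ} (h : (k:ℝ) ≤ r) (hr : 0 ≤ r) : ((k.toNat : ℕ) : ℝ) ≤ r := by
  rcases le_or_gt k 0 with hk | hk
  · rw [Int.toNat_of_nonpos hk]; exact_mod_cast hr
  · have e : (k.toNat : ℤ) = k := Int.toNat_of_nonneg hk.le
    calc ((k.toNat : ℕ) : ℝ) = ((k:ℤ):ℝ) := by exact_mod_cast congrArg (Int.cast : ℤ → ℝ) e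
      _ ≤ r := h

lemma pow11_root {x : ℝ} (hx : 0 ≤ x) : ((x ^ (11:ℕ)) : ℝ) ^ ((1:ℝ)/11) = x := by
  rw [← Real.rpow_natCast x 11, ← Real.rpow_mul hx]
  norm_num

lemma three_rpow_le : (3:ℝ) ^ ((1:ℝ)/11) ≤ 2 := by
  have h := Real.rpow_le_rpow (by norm_num : (0:ℝ) ≤ 3)
    (by norm_num : (3:ℝ) ≤ 2 ^ (11:ℕ)) (by norm_num : (0:ℝ) ≤ 1/11)
  rwa [pow11_root (by norm_num : (0:ℝ) ≤ 2)] at h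

lemma two_rpow_le : (2:ℝ) ^ ((9:ℝ)/2) ≤ 23 := by
  have hsq : ((2:ℝ) ^ ((9:ℝ)/2)) ^ (2:ℕ) = 2 ^ (9:ℕ) := by
    rw [← Real.rpow_natCast ((2:ℝ) ^ ((9:ℝ)/2)) 2, ← Real.rpow_mul (by norm_num : (0:ℝ) ≤ 2),
      ← Real.rpow_natCast (2:ℝ) 9]
    norm_num
  nlinarith [Real.rpow_nonneg (by norm_num : (0:ℝ) ≤ 2) ((9:ℝ)/2)]

noncomputable def uu (X : ℝ) (x : ℤ) : ℝ := Real.sqrt ((x:ℝ)^(11:ℕ) - X)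
noncomputable def vv (X : ℝ) (x : ℤ) : ℝ := Real.sqrt ((x:ℝ)^(11:ℕ) + X)
/-- The abc Conjecture: for every ε > 0 there is a constant `C > 0` such that for all
nonzero coprime integers `a`, `b`, `c` with `a + b = c` one has
`|c| ≤ C * rad(abc)^(1+ε)`. -/
def ABCConjecture : Prop :=
  ∀ ε : ℝ, 0 < ε → ∃ C : ℝ, 0 < C ∧ ∀ a b c : ℤ,
    a ≠ 0 → b ≠ 0 → c ≠ 0 → IsCoprime a b → a + b = c →
    ((|c| : ℤ) : ℝ) ≤ C * (rad (a * b * c).natAbs : ℝ) ^ (1 + ε)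
set_option maxHeartbeats 2000000 in
theorem abc_implies_N2_bound (habc : ABCConjecture) :
    ∀ η : ℝ, 0 < η → ∃ C : ℝ, 0 < C ∧ ∀ X : ℝ, 2 ≤ X →
      (Set.ncard {p : ℤ × ℤ | 1 ≤ p.1 ∧
          1 ≤ |p.1 ^ 11 - p.2 ^ 2| ∧ ((|p.1 ^ 11 - p.2 ^ 2| : ℤ) : ℝ) ≤ X} : ℝ)
        ≤ C * (X ^ ((13 : ℝ) / 22) + X ^ ((4 : ℝ) / 9 + η)) := by
  intro η hη
  have hmin : 0 < min η 1 := lt_min hη one_pos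
  have hε0 : 0 < min η 1 / 3 := by linarith
  have hε3 : min η 1 / 3 ≤ 1/3 := by
    have : min η 1 ≤ 1 := min_le_right _ _
    linarith
  obtain ⟨C, hC, habc'⟩ := habc (min η 1 / 3) hε0
  have hC₁ : (0:ℝ) < 4*C+1 := by linarith
  refine ⟨28 + 2*(4*C+1), by linarith, ?_⟩
  intro X hX
  have hXpos : (0:ℝ) < X := by linarith
  have hX1 : (1:ℝ) ≤ X := by linarith
  classical
  set S := {p : ℤ × ℤ | 1 ≤ p.1 ∧
      1 ≤ |p.1 ^ 11 - p.2 ^ 2| ∧ ((|p.1 ^ 11 - p.2 ^ 2| : ℤ) : ℝ) ≤ X} with hSdef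
  set A : ℤ := ⌊(3*X) ^ ((1:ℝ)/11)⌋ with hAd
  set B : ℤ := ⌊2 * Real.sqrt X⌋ with hBd
  set m : ℤ := ⌊(4*C+1) * X ^ ((4:ℝ)/9 + η)⌋ with hmd
  have h3X0 : (0:ℝ) ≤ 3*X := by linarith
  have h3X1 : (1:ℝ) ≤ (3*X) ^ ((1:ℝ)/11) := by
    calc (1:ℝ) = 1 ^ ((1:ℝ)/11) := (Real.one_rpow _).symm
      _ ≤ (3*X) ^ ((1:ℝ)/11) := Real.rpow_le_rpow (by norm_num) (by linarith) (by norm_num)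
  have hA1 : 1 ≤ A := Int.le_floor.mpr (by exact_mod_cast h3X1)
  set F1 : Finset (ℤ×ℤ) := Finset.Icc 1 A ×ˢ Finset.Icc (-B) B with hF1d
  set F2 : Finset (ℤ×ℤ) := (Finset.Icc (A+1) m).biUnion
      (fun x => ({x} : Finset ℤ) ×ˢ
        (Finset.Icc ⌈uu X x⌉ ⌊vv X x⌋ ∪ Finset.Icc (-⌊vv X x⌋) (-⌈uu X x⌉))) with hF2d
  -- the subset claim
  have hsub : S ⊆ ↑(F1 ∪ F2) := by
    rintro ⟨x, y⟩ hp
    obtain ⟨hx, hd1, hd2⟩ := hp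
    simp only at hx hd1 hd2
    have hx0R : (0:ℝ) < (x:ℝ) := by exact_mod_cast hx
    have hdabs : |((x:ℝ))^(11:ℕ) - ((y:ℝ))^(2:ℕ)| ≤ X := by
      rw [Int.cast_abs] at hd2
      push_cast at hd2
      exact hd2
    have h_lb : (x:ℝ)^(11:ℕ) - X ≤ (y:ℝ)^(2:ℕ) := by
      have := (abs_le.mp hdabs).2; linarith
    have h_ub : (y:ℝ)^(2:ℕ) ≤ (x:ℝ)^(11:ℕ) + X := by
      have := (abs_le.mp hdabs).1; linarith
    simp only [Finset.coe_union, Set.mem_union, Finset.mem_coe]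
    by_cases hcase : (x:ℝ)^(11:ℕ) ≤ 3*X
    · left
      rw [hF1d, Finset.mem_product]
      constructor
      · rw [Finset.mem_Icc]
        refine ⟨hx, Int.le_floor.mpr ?_⟩
        have h1 := Real.rpow_le_rpow (by positivity) hcase (by norm_num : (0:ℝ) ≤ 1/11)
        rwa [pow11_root hx0R.le] at h1
      · rw [Finset.mem_Icc]
        have hyabs : |(y:ℝ)| ≤ 2 * Real.sqrt X := by
          rw [← Real.sqrt_sq_eq_abs]
          have h3 : (y:ℝ)^(2:ℕ) ≤ (2*Real.sqrt X)^(2:ℕ) := by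
            rw [mul_pow, Real.sq_sqrt hXpos.le]; linarith
          calc Real.sqrt ((y:ℝ)^2) ≤ Real.sqrt ((2*Real.sqrt X)^2) := Real.sqrt_le_sqrt h3
            _ = 2*Real.sqrt X := Real.sqrt_sq (by positivity)
        constructor
        · rw [show -B = -B by rfl]
          have h4 : ((-y : ℤ):ℝ) ≤ 2 * Real.sqrt X := by
            push_cast
            calc -(y:ℝ) ≤ |(y:ℝ)| := neg_le_abs _
              _ ≤ 2*Real.sqrt X := hyabs
          have := Int.le_floor.mpr h4
          omega
        · exact Int.le_floor.mpr (le_trans (le_abs_self _) hyabs)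
    · right
      push_neg at hcase
      rw [hF2d, Finset.mem_biUnion]
      refine ⟨x, ?_, ?_⟩
      · rw [Finset.mem_Icc]
        constructor
        · have h1 : (3*X) ^ ((1:ℝ)/11) < (x:ℝ) := by
            have h2 := Real.rpow_lt_rpow h3X0 hcase (by norm_num : (0:ℝ) < 1/11)
            rwa [pow11_root hx0R.le] at h2
          have := Int.floor_lt.mpr h1
          omega
        · apply Int.le_floor.mpr
          exact convert_bound C η X hC hη hX x hx
            (abc_x_bound C (min η 1 / 3) X hC hε0 hε3 habc' hX x y hx hcase hd1 hd2)
      · rw [Finset.mem_product, Finset.mem_singleton]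
        refine ⟨rfl, ?_⟩
        have hu_le : uu X x ≤ |(y:ℝ)| := by
          rw [← Real.sqrt_sq_eq_abs]
          exact Real.sqrt_le_sqrt h_lb
        have hv_ge : |(y:ℝ)| ≤ vv X x := by
          rw [← Real.sqrt_sq_eq_abs]
          exact Real.sqrt_le_sqrt h_ub
        rw [Finset.mem_union, Finset.mem_Icc, Finset.mem_Icc]
        rcases le_or_gt 0 y with hy | hy
        · left
          constructor
          · apply Int.ceil_le.mpr
            calc uu X x ≤ |(y:ℝ)| := hu_le
              _ = (y:ℝ) := abs_of_nonneg (by exact_mod_cast hy)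
          · apply Int.le_floor.mpr
            calc ((y:ℤ):ℝ) ≤ |(y:ℝ)| := le_abs_self _
              _ ≤ vv X x := hv_ge
        · right
          have h5 : ⌈uu X x⌉ ≤ -y := by
            apply Int.ceil_le.mpr
            calc uu X x ≤ |(y:ℝ)| := hu_le
              _ = ((-y : ℤ):ℝ) := by
                  push_cast
                  rw [abs_of_neg (by exact_mod_cast hy)]
          have h6 : -y ≤ ⌊vv X x⌋ := by
            apply Int.le_floor.mpr
            calc ((-y:ℤ):ℝ) = |(y:ℝ)| := by
                  push_cast
                  rw [abs_of_neg (by exact_mod_cast hy)]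
              _ ≤ vv X x := hv_ge
          omega
  -- counting
  have hn1 : ((S.ncard : ℕ) : ℝ) ≤ ((F1 ∪ F2).card : ℝ) := by
    have h := Set.ncard_le_ncard hsub ((F1 ∪ F2).finite_toSet)
    rw [Set.ncard_coe_finset] at h
    exact_mod_cast h
  have hn2 : ((F1 ∪ F2).card : ℝ) ≤ (F1.card : ℝ) + (F2.card : ℝ) := by
    exact_mod_cast Finset.card_union_le F1 F2
  have hsqX1 : (1:ℝ) ≤ Real.sqrt X := Real.one_le_sqrt.mpr hX1
  -- F1 card bound
  have hF1card : (F1.card : ℝ) ≤ 10 * X ^ ((13:ℝ)/22) := by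
    rw [hF1d, Finset.card_product, Int.card_Icc, Int.card_Icc]
    have e1 : A + 1 - 1 = A := by ring
    have e2 : B + 1 - -B = 2*B+1 := by ring
    rw [e1, e2]
    push_cast
    have hAble : ((A.toNat : ℕ) : ℝ) ≤ 2 * X ^ ((1:ℝ)/11) := by
      apply toNat_cast_le
      · calc ((A:ℤ):ℝ) ≤ (3*X) ^ ((1:ℝ)/11) := Int.floor_le _
          _ = 3 ^ ((1:ℝ)/11) * X ^ ((1:ℝ)/11) := Real.mul_rpow (by norm_num) hXpos.le
          _ ≤ 2 * X ^ ((1:ℝ)/11) :=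
              mul_le_mul_of_nonneg_right three_rpow_le (by positivity)
      · positivity
    have hBble : (((2*B+1).toNat : ℕ) : ℝ) ≤ 5 * Real.sqrt X := by
      apply toNat_cast_le
      · have h7 : ((B:ℤ):ℝ) ≤ 2 * Real.sqrt X := Int.floor_le _
        push_cast
        linarith
      · positivity
    calc ((A.toNat : ℕ) : ℝ) * (((2*B+1).toNat : ℕ) : ℝ)
        ≤ (2 * X ^ ((1:ℝ)/11)) * (5 * Real.sqrt X) := by
          apply mul_le_mul hAble hBble (by positivity) (by positivity)
      _ = 10 * (X ^ ((1:ℝ)/11) * X ^ ((1:ℝ)/2)) := by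
          rw [Real.sqrt_eq_rpow]; ring
      _ = 10 * X ^ ((13:ℝ)/22) := by
          rw [← Real.rpow_add hXpos]; norm_num
  -- F2 card bound
  have hA2 : 2 ≤ A + 1 := by omega
  have hperx : ∀ x ∈ Finset.Icc (A+1) m,
      (((({x} : Finset ℤ) ×ˢ
        (Finset.Icc ⌈uu X x⌉ ⌊vv X x⌋ ∪ Finset.Icc (-⌊vv X x⌋) (-⌈uu X x⌉))).card : ℕ) : ℝ)
      ≤ (5/2) * X * (x:ℝ) ^ (-(11:ℝ)/2) + 2 := by
    intro x hxmem
    rw [Finset.mem_Icc] at hxmem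
    have hx2 : 2 ≤ x := by omega
    have hx0R : (0:ℝ) < (x:ℝ) := by exact_mod_cast (by omega : (0:ℤ) < x)
    have hxgt : 3*X < (x:ℝ)^(11:ℕ) := by
      have h1 : (3*X) ^ ((1:ℝ)/11) < (x:ℝ) := Int.floor_lt.mp (by omega)
      have h2 : ((3*X) ^ ((1:ℝ)/11)) ^ (11:ℝ) < ((x:ℝ)) ^ (11:ℝ) :=
        Real.rpow_lt_rpow (by positivity) h1 (by norm_num)
      have e4 : ((3*X) ^ ((1:ℝ)/11)) ^ (11:ℝ) = 3*X := by
        rw [← Real.rpow_mul h3X0]; norm_num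
      have e5 : ((x:ℝ)) ^ (11:ℝ) = (x:ℝ)^(11:ℕ) := by
        rw [← Real.rpow_natCast (x:ℝ) 11]; norm_num
      rw [e4, e5] at h2
      exact h2
    -- geometry of the interval
    have hupos : 0 < uu X x := Real.sqrt_pos.mpr (by linarith)
    have husq : (uu X x)^(2:ℕ) = (x:ℝ)^(11:ℕ) - X := Real.sq_sqrt (by linarith)
    have hvu : uu X x ≤ vv X x := Real.sqrt_le_sqrt (by linarith)
    have hhalfpos : (0:ℝ) < (x:ℝ)^((11:ℝ)/2) := Real.rpow_pos_of_pos hx0R _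
    have hhalfsq : ((x:ℝ) ^ ((11:ℝ)/2)) ^ (2:ℕ) = (x:ℝ)^(11:ℕ) := by
      rw [← Real.rpow_natCast ((x:ℝ) ^ ((11:ℝ)/2)) 2, ← Real.rpow_mul hx0R.le,
        ← Real.rpow_natCast (x:ℝ) 11]
      norm_num
    have hu_lb : (4/5) * (x:ℝ)^((11:ℝ)/2) ≤ uu X x := by
      rw [show uu X x = Real.sqrt ((x:ℝ)^(11:ℕ) - X) from rfl,
        Real.le_sqrt (by positivity) (by linarith)]
      rw [mul_pow]
      nlinarith [hhalfsq]
    have hv_le : vv X x ≤ uu X x + X / (uu X x) := by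
      have hdm : X / (uu X x) * (uu X x) = X := div_mul_cancel₀ X hupos.ne'
      have hexp : (uu X x + X/(uu X x))^(2:ℕ) = (uu X x)^(2:ℕ) + 2*X + (X/(uu X x))^(2:ℕ) := by
        linear_combination 2 * hdm
      have h8 : (x:ℝ)^(11:ℕ) + X ≤ (uu X x + X/(uu X x))^(2:ℕ) := by
        rw [hexp, husq]
        nlinarith [sq_nonneg (X/(uu X x))]
      calc vv X x = Real.sqrt ((x:ℝ)^(11:ℕ) + X) := rfl
        _ ≤ Real.sqrt ((uu X x + X/(uu X x))^(2:ℕ)) := Real.sqrt_le_sqrt h8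
        _ = uu X x + X/(uu X x) := Real.sqrt_sq (by positivity)
    have hXu : X / (uu X x) ≤ (5/4) * X * (x:ℝ) ^ (-(11:ℝ)/2) := by
      have h9 : X / (uu X x) ≤ X / ((4/5) * (x:ℝ)^((11:ℝ)/2)) :=
        div_le_div_of_nonneg_left hXpos.le (by positivity) hu_lb
      calc X / (uu X x) ≤ X / ((4/5) * (x:ℝ)^((11:ℝ)/2)) := h9
        _ = (5/4) * X * ((x:ℝ)^((11:ℝ)/2))⁻¹ := by
            rw [div_eq_mul_inv, mul_inv, show ((4:ℝ)/5)⁻¹ = 5/4 by norm_num]; ring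
        _ = (5/4) * X * (x:ℝ) ^ (-(11:ℝ)/2) := by
            rw [show (-(11:ℝ)/2) = -((11:ℝ)/2) by norm_num, Real.rpow_neg hx0R.le]
    -- cardinality
    have hcard1 : ((({x} : Finset ℤ) ×ˢ
        (Finset.Icc ⌈uu X x⌉ ⌊vv X x⌋ ∪ Finset.Icc (-⌊vv X x⌋) (-⌈uu X x⌉))).card : ℕ)
        = (Finset.Icc ⌈uu X x⌉ ⌊vv X x⌋ ∪ Finset.Icc (-⌊vv X x⌋) (-⌈uu X x⌉)).card := by
      rw [Finset.card_product, Finset.card_singleton, one_mul]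
    rw [hcard1]
    have hcard2 : ((Finset.Icc ⌈uu X x⌉ ⌊vv X x⌋ ∪ Finset.Icc (-⌊vv X x⌋) (-⌈uu X x⌉)).card : ℝ)
        ≤ 2 * (((⌊vv X x⌋ + 1 - ⌈uu X x⌉).toNat : ℕ) : ℝ) := by
      have h10 := Finset.card_union_le (Finset.Icc ⌈uu X x⌉ ⌊vv X x⌋)
        (Finset.Icc (-⌊vv X x⌋) (-⌈uu X x⌉))
      have h11 : (Finset.Icc ⌈uu X x⌉ ⌊vv X x⌋).card = (⌊vv X x⌋ + 1 - ⌈uu X x⌉).toNat := Int.card_Icc _ _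
      have h12 : (Finset.Icc (-⌊vv X x⌋) (-⌈uu X x⌉)).card = (⌊vv X x⌋ + 1 - ⌈uu X x⌉).toNat := by
        rw [Int.card_Icc]
        congr 1
        ring
      rw [h11, h12] at h10
      have h13c : ((Finset.Icc ⌈uu X x⌉ ⌊vv X x⌋ ∪ Finset.Icc (-⌊vv X x⌋) (-⌈uu X x⌉)).card : ℝ)
          ≤ (((⌊vv X x⌋ + 1 - ⌈uu X x⌉).toNat + (⌊vv X x⌋ + 1 - ⌈uu X x⌉).toNat : ℕ) : ℝ) := by
        exact_mod_cast h10
      calc ((Finset.Icc ⌈uu X x⌉ ⌊vv X x⌋ ∪ Finset.Icc (-⌊vv X x⌋) (-⌈uu X x⌉)).card : ℝ)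
          ≤ (((⌊vv X x⌋ + 1 - ⌈uu X x⌉).toNat + (⌊vv X x⌋ + 1 - ⌈uu X x⌉).toNat : ℕ) : ℝ) := h13c
        _ = 2 * (((⌊vv X x⌋ + 1 - ⌈uu X x⌉).toNat : ℕ) : ℝ) := by push_cast; ring
    have hcard3 : (((⌊vv X x⌋ + 1 - ⌈uu X x⌉).toNat : ℕ) : ℝ) ≤ vv X x - uu X x + 1 := by
      apply toNat_cast_le
      · push_cast
        have h13 : ((⌊vv X x⌋ : ℤ):ℝ) ≤ vv X x := Int.floor_le _
        have h14 : uu X x ≤ ((⌈uu X x⌉ : ℤ):ℝ) := Int.le_ceil _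
        linarith
      · linarith
    calc ((Finset.Icc ⌈uu X x⌉ ⌊vv X x⌋ ∪ Finset.Icc (-⌊vv X x⌋) (-⌈uu X x⌉)).card : ℝ)
        ≤ 2 * (((⌊vv X x⌋ + 1 - ⌈uu X x⌉).toNat : ℕ) : ℝ) := hcard2
      _ ≤ 2 * (vv X x - uu X x + 1) := by linarith
      _ ≤ 2 * ((5/4) * X * (x:ℝ) ^ (-(11:ℝ)/2) + 1) := by
          have h15 : vv X x - uu X x ≤ (5/4) * X * (x:ℝ) ^ (-(11:ℝ)/2) := by
            have := hv_le
            linarith [hXu]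
          linarith
      _ = (5/2) * X * (x:ℝ) ^ (-(11:ℝ)/2) + 2 := by ring
  have hF2card : (F2.card : ℝ) ≤ 13 * X ^ ((13:ℝ)/22) + 2*(4*C+1)*X^((4:ℝ)/9+η) := by
    have h16 : (F2.card : ℝ) ≤ ∑ x ∈ Finset.Icc (A+1) m,
        ((5/2) * X * (x:ℝ) ^ (-(11:ℝ)/2) + 2) := by
      calc (F2.card : ℝ)
          ≤ ((∑ x ∈ Finset.Icc (A+1) m, (({x} : Finset ℤ) ×ˢ
            (Finset.Icc ⌈uu X x⌉ ⌊vv X x⌋ ∪ Finset.Icc (-⌊vv X x⌋) (-⌈uu X x⌉))).card : ℕ) : ℝ) := by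
            exact_mod_cast Finset.card_biUnion_le
        _ = ∑ x ∈ Finset.Icc (A+1) m, (((({x} : Finset ℤ) ×ˢ
            (Finset.Icc ⌈uu X x⌉ ⌊vv X x⌋ ∪ Finset.Icc (-⌊vv X x⌋) (-⌈uu X x⌉))).card : ℕ) : ℝ) := by
            push_cast; rfl
        _ ≤ ∑ x ∈ Finset.Icc (A+1) m, ((5/2) * X * (x:ℝ) ^ (-(11:ℝ)/2) + 2) :=
            Finset.sum_le_sum hperx
    have h17 : ∑ x ∈ Finset.Icc (A+1) m, ((5/2) * X * (x:ℝ) ^ (-(11:ℝ)/2) + 2)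
        = (5/2) * X * (∑ x ∈ Finset.Icc (A+1) m, (x:ℝ) ^ (-(11:ℝ)/2))
          + 2 * ((Finset.Icc (A+1) m).card : ℝ) := by
      rw [Finset.sum_add_distrib, Finset.sum_const, ← Finset.mul_sum]
      push_cast
      ring
    -- sum bound
    have h18 : ∑ x ∈ Finset.Icc (A+1) m, ((x:ℝ)) ^ (-(11:ℝ)/2)
        ≤ (2/9) * ((A:ℝ)) ^ (-(9:ℝ)/2) := by
      have := sum_rpow_le hA2 m
      have e3 : ((A:ℝ) + 1 - 1) = (A:ℝ) := by ring
      rw [show (((A+1 : ℤ)):ℝ) = (A:ℝ) + 1 by push_cast; ring, e3] at this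
      exact this
    -- lower bound A ≥ X^{1/11}/2
    have hAlb : X ^ ((1:ℝ)/11) / 2 ≤ (A:ℝ) := by
      have hX11 : (1:ℝ) ≤ X ^ ((1:ℝ)/11) := by
        calc (1:ℝ) = 1 ^ ((1:ℝ)/11) := (Real.one_rpow _).symm
          _ ≤ X ^ ((1:ℝ)/11) := Real.rpow_le_rpow (by norm_num) hX1 (by norm_num)
      have hmono : X ^ ((1:ℝ)/11) ≤ (3*X) ^ ((1:ℝ)/11) :=
        Real.rpow_le_rpow hXpos.le (by linarith) (by norm_num)
      have hAfl : (3*X) ^ ((1:ℝ)/11) - 1 < (A:ℝ) := Int.sub_one_lt_floor _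
      have hA1R : (1:ℝ) ≤ (A:ℝ) := by exact_mod_cast hA1
      rcases le_or_gt 2 (X ^ ((1:ℝ)/11)) with hc | hc
      · linarith
      · linarith
    have h19 : ((A:ℝ)) ^ (-(9:ℝ)/2) ≤ 23 * X ^ (-(9:ℝ)/22) := by
      have hden : (0:ℝ) < X ^ ((1:ℝ)/11) / 2 := by positivity
      have h20 : ((A:ℝ)) ^ (-(9:ℝ)/2) ≤ (X ^ ((1:ℝ)/11) / 2) ^ (-(9:ℝ)/2) :=
        Real.rpow_le_rpow_of_nonpos hden hAlb (by norm_num)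
      have h21 : (X ^ ((1:ℝ)/11) / 2) ^ (-(9:ℝ)/2)
          = X ^ (-(9:ℝ)/22) * 2 ^ ((9:ℝ)/2) := by
        rw [Real.div_rpow (by positivity) (by norm_num)]
        rw [← Real.rpow_mul hXpos.le]
        rw [show (1:ℝ)/11 * (-(9:ℝ)/2) = -(9:ℝ)/22 by norm_num]
        rw [show (-(9:ℝ)/2) = -((9:ℝ)/2) by norm_num, Real.rpow_neg (by norm_num : (0:ℝ) ≤ 2)]
        field_simp
      rw [h21] at h20
      calc ((A:ℝ)) ^ (-(9:ℝ)/2) ≤ X ^ (-(9:ℝ)/22) * 2 ^ ((9:ℝ)/2) := h20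
        _ ≤ X ^ (-(9:ℝ)/22) * 23 := by
            apply mul_le_mul_of_nonneg_left two_rpow_le (by positivity)
        _ = 23 * X ^ (-(9:ℝ)/22) := by ring
    have h22 : (((Finset.Icc (A+1) m).card : ℕ) : ℝ) ≤ (4*C+1) * X^((4:ℝ)/9+η) := by
      rw [Int.card_Icc]
      apply toNat_cast_le
      · have h23 : ((m:ℤ):ℝ) ≤ (4*C+1) * X^((4:ℝ)/9+η) := Int.floor_le _
        have h24 : (1:ℝ) ≤ ((A:ℤ):ℝ) := by exact_mod_cast hA1
        push_cast
        linarith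
      · positivity
    have h25 : (5/2) * X * ((2/9) * ((A:ℝ)) ^ (-(9:ℝ)/2)) ≤ 13 * X ^ ((13:ℝ)/22) := by
      have h26 : X * X ^ (-(9:ℝ)/22) = X ^ ((13:ℝ)/22) := by
        nth_rewrite 1 [← Real.rpow_one X]
        rw [← Real.rpow_add hXpos]
        norm_num
      calc (5/2) * X * ((2/9) * ((A:ℝ)) ^ (-(9:ℝ)/2))
          ≤ (5/2) * X * ((2/9) * (23 * X ^ (-(9:ℝ)/22))) := by
            have hXn : (0:ℝ) ≤ (5/2) * X := by positivity
            have := mul_le_mul_of_nonneg_left h19 (by positivity : (0:ℝ) ≤ (2:ℝ)/9)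
            nlinarith [h19, hXpos]
        _ = (115/9) * (X * X ^ (-(9:ℝ)/22)) := by ring
        _ = (115/9) * X ^ ((13:ℝ)/22) := by rw [h26]
        _ ≤ 13 * X ^ ((13:ℝ)/22) := by
            have : (0:ℝ) ≤ X ^ ((13:ℝ)/22) := by positivity
            nlinarith
    have hsum_nonneg : (0:ℝ) ≤ ∑ x ∈ Finset.Icc (A+1) m, (x:ℝ) ^ (-(11:ℝ)/2) := by
      apply Finset.sum_nonneg
      intro x hxm
      rw [Finset.mem_Icc] at hxm
      have : (0:ℝ) < (x:ℝ) := by exact_mod_cast (by omega : (0:ℤ) < x)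
      positivity
    calc (F2.card : ℝ) ≤ (5/2) * X * (∑ x ∈ Finset.Icc (A+1) m, (x:ℝ) ^ (-(11:ℝ)/2))
          + 2 * ((Finset.Icc (A+1) m).card : ℝ) := by rw [← h17]; exact h16
      _ ≤ (5/2) * X * ((2/9) * ((A:ℝ)) ^ (-(9:ℝ)/2)) + 2 * ((4*C+1) * X^((4:ℝ)/9+η)) := by
          have hXn : (0:ℝ) ≤ (5/2) * X := by positivity
          have h27 := mul_le_mul_of_nonneg_left h18 hXn
          have h28 : ((Finset.Icc (A+1) m).card : ℝ) ≤ (4*C+1) * X^((4:ℝ)/9+η) := by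
            exact_mod_cast h22
          linarith
      _ ≤ 13 * X ^ ((13:ℝ)/22) + 2*(4*C+1)*X^((4:ℝ)/9+η) := by linarith
  -- conclude
  have hp1 : (0:ℝ) ≤ X ^ ((13:ℝ)/22) := by positivity
  have hp2 : (0:ℝ) ≤ X ^ ((4:ℝ)/9+η) := by positivity
  calc ((S.ncard : ℕ) : ℝ) ≤ (F1.card : ℝ) + (F2.card : ℝ) := le_trans hn1 hn2
    _ ≤ 10 * X ^ ((13:ℝ)/22) + (13 * X ^ ((13:ℝ)/22) + 2*(4*C+1)*X^((4:ℝ)/9+η)) := by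
        linarith
    _ ≤ (28 + 2*(4*C+1)) * (X ^ ((13:ℝ)/22) + X ^ ((4:ℝ)/9+η)) := by nlinarith
end

section
/- For every natural number N and every natural number m ≤ N, the coefficient of X^m in the integer polynomial ∏_{n=1}^{N} (1 − X^n)^3 equals (−1)^k (2k+1) if m = k(k+1)/2 for some natural number k, and equals 0 otherwise. -/
open Polynomial Finset

namespace Jac

/-- triangular numbers: T k = k(k-1)/2 -/
def T : ℕ → ℕ
  | 0 => 0
  | k+1 => T k + k

/-- Gaussian-binomial-with-power coefficients: A n k = q^{T k} * [n choose k]_q -/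
noncomputable def A : ℕ → ℕ → Polynomial ℤ
  | 0, 0 => 1
  | 0, _+1 => 0
  | n+1, 0 => A n 0
  | n+1, k+1 => A n (k+1) + X^n * A n k

noncomputable def prodQ (n : ℕ) : Polynomial ℤ := ∏ i ∈ range n, (1 - X ^ (i+1))

lemma T_succ (k : ℕ) : T (k+1) = T k + k := rfl

lemma two_T (n : ℕ) : 2 * T (n+1) = (n+1) * n := by
  induction n with
  | zero => rfl
  | succ n ih =>
    rw [T_succ]
    have h : (n+1+1)*(n+1) = (n+1)*n + 2*(n+1) := by ring
    linarith

lemma T_add (a b : ℕ) : T (a + b) = T a + T b + a * b := by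
  induction b with
  | zero => simp [T]
  | succ b ih =>
    have h1 : a + (b+1) = (a+b) + 1 := by omega
    rw [h1, T_succ, ih, T_succ]
    have h : a * (b+1) = a * b + a := by ring
    linarith

lemma T_eq (k : ℕ) : T (k+1) = k * (k+1) / 2 := by
  have h := two_T k
  have h2 : k * (k+1) = (k+1) * k := by ring
  omega

lemma T_lt_T {a b : ℕ} (ha : 1 ≤ a) (h : a < b) : T a < T b := by
  induction b with
  | zero => omega
  | succ b ih =>
    rw [T_succ]
    rcases Nat.lt_or_ge a b with h' | h'
    · have := ih h'; omega
    · have : a = b := by omega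
      subst this; omega

lemma T_inj {a b : ℕ} (ha : 1 ≤ a) (hb : 1 ≤ b) (h : T a = T b) : a = b := by
  rcases Nat.lt_trichotomy a b with h' | h' | h'
  · exact absurd h (Nat.ne_of_lt (T_lt_T ha h'))
  · exact h'
  · exact absurd h.symm (Nat.ne_of_lt (T_lt_T hb h'))

lemma T_ge (i : ℕ) : i - 1 ≤ T i := by
  induction i with
  | zero => simp
  | succ i ih => rw [T_succ]; omega

lemma A_zero (n : ℕ) : A n 0 = 1 := by
  induction n with
  | zero => rfl
  | succ n ih => rw [show A (n+1) 0 = A n 0 from rfl, ih]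

lemma A_succ_succ (n k : ℕ) : A (n+1) (k+1) = A n (k+1) + X^n * A n k := rfl

lemma A_of_lt {n k : ℕ} (h : n < k) : A n k = 0 := by
  induction n generalizing k with
  | zero => cases k with
    | zero => omega
    | succ k => rfl
  | succ n ih =>
    cases k with
    | zero => omega
    | succ k =>
      rw [A_succ_succ, ih (by omega), ih (by omega)]; ring

lemma prodQ_succ (n : ℕ) : prodQ (n+1) = prodQ n * (1 - X ^ (n+1)) :=
  prod_range_succ _ _

lemma A_zero_zero : A 0 0 = 1 := rfl

/-- the q-binomial theorem (in the outer-variable polynomial ring) -/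
lemma gauss (n : ℕ) (u v : Polynomial (Polynomial ℤ)) :
    ∏ j ∈ range n, (u + C (X ^ j) * v)
      = ∑ k ∈ range (n+1), C (A n k) * u ^ (n - k) * v ^ k := by
  induction n with
  | zero => simp [A_zero_zero]
  | succ n ih =>
    rw [prod_range_succ, ih, mul_add, Finset.sum_mul, Finset.sum_mul]
    have h1 : ∑ k ∈ range (n+1), C (A n k) * u ^ (n-k) * v ^ k * u
        = C (A n 0) * u ^ (n+1) + ∑ k ∈ range n, C (A n (k+1)) * u ^ (n-k) * v^(k+1) := by
      rw [Finset.sum_range_succ']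
      rw [add_comm]
      congr 1
      · simp only [Nat.sub_zero, pow_zero, mul_one]; ring
      · apply Finset.sum_congr rfl
        intro k hk
        simp only [Finset.mem_range] at hk
        have hk' : n - (k+1) + 1 = n - k := by omega
        rw [← hk']; ring
    rw [h1]
    have h2 : (∑ k ∈ range n, C (A n (k+1)) * u ^ (n-k) * v^(k+1))
        = ∑ k ∈ range (n+1), C (A n (k+1)) * u ^ (n-k) * v^(k+1) := by
      rw [Finset.sum_range_succ, A_of_lt (by omega)]; simp
    rw [h2]
    rw [Finset.sum_range_succ' (fun k => C (A (n+1) k) * u ^ (n+1-k) * v ^ k) (n+1)]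
    rw [A_zero, A_zero]
    simp only [map_one, one_mul, pow_zero, mul_one, Nat.sub_zero]
    rw [add_comm (∑ k ∈ range (n+1), C (A (n+1) (k+1)) * u ^ (n+1-(k+1)) * v ^ (k+1)) (u^(n+1)),
      add_assoc, ← Finset.sum_add_distrib]
    congr 1
    apply Finset.sum_congr rfl
    intro k hk
    simp only [Finset.mem_range] at hk
    rw [A_succ_succ, map_add]
    have h3 : n + 1 - (k+1) = n - k := by omega
    rw [h3, map_mul]
    ring

lemma A_prod (n : ℕ) : ∀ k ≤ n, A n k * prodQ k = X^(T k) * ∏ i ∈ range k, (1 - X^(n - i)) := by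
  induction n with
  | zero =>
    intro k hk
    have hk0 : k = 0 := by omega
    subst hk0
    simp [A_zero_zero, prodQ, T]
  | succ n ih =>
    intro k hk
    cases k with
    | zero => simp [A_zero, prodQ, T]
    | succ k =>
      rw [A_succ_succ, prodQ_succ, add_mul]
      have hgoal : (X:Polynomial ℤ)^(T (k+1)) * ∏ i ∈ range (k+1), (1 - X^(n + 1 - i))
          = X^(T (k+1)) * ((∏ i ∈ range k, (1 - X^(n - i))) * (1 - X^(n+1))) := by
        congr 1
        rw [Finset.prod_range_succ']
        simp [Nat.succ_sub_succ]
      rw [hgoal]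
      rcases Nat.lt_or_ge k n with hkn | hkn
      · -- k + 1 ≤ n
        have ih1 := ih (k+1) (by omega)
        have ih2 := ih k (by omega)
        have e0 : A n (k+1) * (prodQ k * (1 - X^(k+1))) = A n (k+1) * prodQ (k+1) := by
          rw [prodQ_succ]
        rw [mul_assoc (X^n), e0, ih1, Finset.prod_range_succ]
        have e1 : X^n * (A n k * prodQ k) * (1 - X^(k+1))
            = X^n * (X^(T k) * ∏ i ∈ range k, (1 - X^(n - i))) * (1 - X^(k+1)) := by
          rw [ih2]
        rw [show X^n * (A n k * (prodQ k * (1 - X^(k+1)))) =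
            X^n * (A n k * prodQ k) * (1 - X^(k+1)) by ring, e1]
        have p1 : (X:Polynomial ℤ)^(T (k+1)) * X^(n-k) = X^n * X^(T k) := by
          rw [← pow_add, ← pow_add]; congr 1; rw [T_succ]; omega
        have p2 : X^n * (X:Polynomial ℤ)^(T k) * X^(k+1) = X^(T (k+1)) * X^(n+1) := by
          rw [← pow_add, ← pow_add, ← pow_add]; congr 1; rw [T_succ]; omega
        linear_combination (∏ i ∈ range k, (1 - X^(n - i))) * (-p1 - p2)
      · -- k = n
        have hk' : k = n := by omega
        subst hk'
        rw [A_of_lt (by omega)]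
        have ih2 := ih k (le_refl k)
        have p1 : (X:Polynomial ℤ)^k * X^(T k) = X^(T (k+1)) := by
          rw [← pow_add]; congr 1; rw [T_succ]; omega
        linear_combination (1 - X^(k+1)) * X^k * ih2
          + (1 - X^(k+1)) * (∏ i ∈ range k, (1 - X^(k - i))) * p1

lemma dvd_mul_sub_one {b : ℕ} {p q : Polynomial ℤ} (hp : (X:Polynomial ℤ)^b ∣ p - 1)
    (hq : (X:Polynomial ℤ)^b ∣ q - 1) : (X:Polynomial ℤ)^b ∣ p * q - 1 := by
  have : p * q - 1 = p * (q - 1) + (p - 1) := by ring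
  rw [this]
  exact dvd_add (Dvd.dvd.mul_left hq p) hp

lemma prod_sub_one_dvd (s : Finset ℕ) (b : ℕ) (f : ℕ → ℕ) (h : ∀ e ∈ s, b ≤ f e) :
    (X:Polynomial ℤ)^b ∣ (∏ e ∈ s, (1 - X^(f e))) - 1 := by
  classical
  induction s using Finset.induction_on with
  | empty => simp
  | @insert a s' hx ih =>
    rw [Finset.prod_insert hx]
    apply dvd_mul_sub_one
    · have : (1:Polynomial ℤ) - X^(f a) - 1 = -X^(f a) := by ring
      rw [this]
      exact dvd_neg.mpr (pow_dvd_pow _ (h a (Finset.mem_insert_self a s')))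
    · exact ih (fun e he => h e (Finset.mem_insert_of_mem he))

lemma one_sub_X_pow_ne_zero {n : ℕ} (hn : 1 ≤ n) : (1 - X^n : Polynomial ℤ) ≠ 0 := by
  intro h
  have h0 := congrArg (Polynomial.eval 0) h
  simp [zero_pow (by omega : n ≠ 0)] at h0

lemma prodQ_split {k N : ℕ} (h : k ≤ N) :
    prodQ N = prodQ k * ∏ i ∈ Ico k N, (1 - X^(i+1)) := by
  unfold prodQ
  rw [Finset.range_eq_Ico, Finset.range_eq_Ico]
  exact (Finset.prod_Ico_consecutive (fun i => (1:Polynomial ℤ) - X^(i+1)) (Nat.zero_le k) h).symm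

lemma key_u (N k : ℕ) (hk : k ≤ 2*N) :
    ∃ u : Polynomial ℤ, prodQ N * A (2*N) k = X^(T k) * u ∧
      (X:Polynomial ℤ)^(min (k+1) (2*N+1-k)) ∣ u - 1 := by
  have hAp := A_prod (2*N) k hk
  rcases le_or_gt k N with hkN | hkN
  · -- k ≤ N
    refine ⟨(∏ i ∈ Ico k N, (1 - X^(i+1))) * ∏ i ∈ range k, (1 - X^(2*N - i)), ?_, ?_⟩
    · rw [prodQ_split hkN]
      calc prodQ k * (∏ i ∈ Ico k N, (1 - X^(i+1))) * A (2*N) k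
          = (A (2*N) k * prodQ k) * ∏ i ∈ Ico k N, (1 - X^(i+1)) := by ring
        _ = X^(T k) * (∏ i ∈ range k, (1 - X^(2*N - i))) * ∏ i ∈ Ico k N, (1 - X^(i+1)) := by
            rw [hAp]
        _ = _ := by ring
    · have hmin : min (k+1) (2*N+1-k) = k + 1 := by omega
      rw [hmin]
      apply dvd_mul_sub_one
      · exact prod_sub_one_dvd _ _ _ (fun e he => by simp only [Finset.mem_Ico] at he; omega)
      · exact prod_sub_one_dvd _ _ _ (fun e he => by simp only [Finset.mem_range] at he; omega)
  · -- N < k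
    have hsplit1 : (∏ i ∈ range k, ((1:Polynomial ℤ) - X^(2*N - i)))
        = (∏ i ∈ range (2*N-k), ((1:Polynomial ℤ) - X^(2*N - i)))
          * (∏ i ∈ Ico (2*N-k) N, ((1:Polynomial ℤ) - X^(2*N - i)))
          * ∏ i ∈ Ico N k, ((1:Polynomial ℤ) - X^(2*N - i)) := by
      rw [Finset.range_eq_Ico, ← Finset.prod_Ico_consecutive (fun i => (1:Polynomial ℤ) - X^(2*N-i)) (Nat.zero_le N) (le_of_lt hkN),
        ← Finset.prod_Ico_consecutive (fun i => (1:Polynomial ℤ) - X^(2*N-i)) (Nat.zero_le (2*N-k)) (by omega : 2*N-k ≤ N),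
        ← Finset.range_eq_Ico]
    have hmid : (∏ i ∈ Ico (2*N-k) N, ((1:Polynomial ℤ) - X^(2*N - i)))
        = ∏ i ∈ Ico N k, (1 - X^(i+1)) := by
      rw [Finset.prod_Ico_eq_prod_range, Finset.prod_Ico_eq_prod_range]
      have hNk : N - (2*N - k) = k - N := by omega
      rw [hNk, ← Finset.prod_range_reflect (fun j => (1:Polynomial ℤ) - X^(N + j + 1)) (k - N)]
      apply Finset.prod_congr rfl
      intro j hj
      simp only [Finset.mem_range] at hj
      congr 2
      omega
    have hQk : prodQ k = prodQ N * ∏ i ∈ Ico N k, (1 - X^(i+1)) := prodQ_split (le_of_lt hkN)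
    refine ⟨(∏ i ∈ range (2*N-k), (1 - X^(2*N - i))) * ∏ i ∈ Ico N k, (1 - X^(2*N - i)), ?_, ?_⟩
    · have hQne : (∏ i ∈ Ico N k, ((1:Polynomial ℤ) - X^(i+1))) ≠ 0 :=
        Finset.prod_ne_zero_iff.mpr (fun i _ => one_sub_X_pow_ne_zero (by omega))
      apply mul_right_cancel₀ hQne
      calc prodQ N * A (2*N) k * ∏ i ∈ Ico N k, (1 - X^(i+1))
          = A (2*N) k * prodQ k := by rw [hQk]; ring
        _ = X^(T k) * ∏ i ∈ range k, (1 - X^(2*N - i)) := hAp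
        _ = X^(T k) * ((∏ i ∈ range (2*N-k), (1 - X^(2*N - i))) * ∏ i ∈ Ico N k, (1 - X^(2*N - i)))
              * ∏ i ∈ Ico N k, (1 - X^(i+1)) := by
            rw [hsplit1, hmid]; ring
    · have hmin : min (k+1) (2*N+1-k) = 2*N+1-k := by omega
      rw [hmin]
      apply dvd_mul_sub_one
      · exact prod_sub_one_dvd _ _ _ (fun e he => by simp only [Finset.mem_range] at he; omega)
      · exact prod_sub_one_dvd _ _ _ (fun e he => by simp only [Finset.mem_Ico] at he; omega)

def tau (N k : ℕ) : ℕ := if N ≤ k then T (k - N + 1) else T (N - k)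

lemma two_T' (n : ℕ) : 2 * T n + n = n * n := by
  induction n with
  | zero => rfl
  | succ n ih =>
    rw [T_succ]
    have h : (n+1) * (n+1) = n * n + 2*n + 1 := by ring
    linarith

lemma expo (N k : ℕ) (hN : 1 ≤ N) (hk : k ≤ 2*N) :
    T k + (N-1)*(2*N-k) = 3*T N + tau N k := by
  rcases le_or_gt N k with h | h
  · obtain ⟨j, rfl⟩ : ∃ j, k = N + j := ⟨k - N, by omega⟩
    have hj : j ≤ N := by omega
    rw [tau, if_pos h, show N + j - N + 1 = j + 1 by omega, T_succ, T_add,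
      show 2*N - (N+j) = N - j by omega]
    zify [hj, hN]
    have hTN : 2*(T N : ℤ) + N = N * N := by exact_mod_cast two_T' N
    linear_combination -hTN
  · obtain ⟨i, rfl⟩ : ∃ i, N = k + i := ⟨N - k, by omega⟩
    have hi : 1 ≤ i := by omega
    rw [tau, if_neg (by omega), show k + i - k = i by omega, T_add,
      show 2*(k+i) - k = k + 2*i by omega]
    zify [show 1 ≤ k + i by omega]
    have hTk : 2*(T k : ℤ) + k = k * k := by exact_mod_cast two_T' k
    have hTi : 2*(T i : ℤ) + i = i * i := by exact_mod_cast two_T' i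
    linear_combination -hTk - 2*hTi

noncomputable def qp (n : ℕ) : Polynomial (Polynomial ℤ) := C (X^n)

noncomputable def Cp (p : Polynomial ℤ) : Polynomial (Polynomial ℤ) := C p

lemma sum_range_T (n : ℕ) : ∑ j ∈ range n, j = T n := by
  induction n with
  | zero => rfl
  | succ n ih => rw [Finset.sum_range_succ, ih, T_succ]

lemma qp_def (n : ℕ) : (C (X^n) : Polynomial (Polynomial ℤ)) = qp n := rfl

lemma Cp_def (p : Polynomial ℤ) : (C p : Polynomial (Polynomial ℤ)) = Cp p := rfl

lemma qp_mul (a b : ℕ) : qp a * qp b = qp (a+b) := by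
  simp only [qp]
  rw [← map_mul, ← pow_add]

lemma Cp_ne_zero {p : Polynomial ℤ} (h : p ≠ 0) : Cp p ≠ 0 := by
  simp only [Cp]
  rwa [ne_eq, Polynomial.C_eq_zero]

/-- The main algebraic identity, with N = M+2. -/
lemma main (M : ℕ) : ∃ u : ℕ → Polynomial ℤ,
    (∀ k ∈ range (2*(M+2)+1), (X:Polynomial ℤ)^(min (k+1) (2*(M+2)+1-k)) ∣ u k - 1) ∧
    prodQ (M+2) ^ 3 = (1 - X^(M+2)) *
      ∑ k ∈ range (2*(M+2)+1), (-1)^(M+2+k) * (k : Polynomial ℤ) * (X^(tau (M+2) k) * u k) := by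
  classical
  set N := M + 2 with hN
  have hN1 : 1 ≤ N := by omega
  have hexu : ∀ k, ∃ u : Polynomial ℤ, (k ≤ 2*N → prodQ N * A (2*N) k = X^(T k) * u ∧
      (X:Polynomial ℤ)^(min (k+1) (2*N+1-k)) ∣ u - 1) := by
    intro k
    rcases le_or_gt k (2*N) with h | h
    · obtain ⟨u, h1, h2⟩ := key_u N k h
      exact ⟨u, fun _ => ⟨h1, h2⟩⟩
    · exact ⟨1, fun h' => absurd h' (by omega)⟩
  choose u hu using hexu
  refine ⟨u, fun k hk => (hu k (by simp only [Finset.mem_range] at hk; omega)).2, ?_⟩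
  have s1 := gauss (2*N) (qp (N-1)) (-X)
  simp only [qp_def] at s1
  simp only [Cp_def] at s1
  -- s1 : ∏ j ∈ range (2*N), (qp (N-1) + qp j * (-X))
  --        = ∑ k ∈ range (2*N+1), Cp (A (2*N) k) * qp (N-1) ^ (2*N-k) * (-X)^k
  have half1 : (∏ j ∈ range N, (qp (N-1) + qp j * (-X)))
      = qp (T N) * ∏ t ∈ range N, (qp t - X) := by
    have hfac : ∀ j ∈ range N, (qp (N-1) + qp j * (-X))
        = qp j * (qp (N-1-j) - X) := by
      intro j hj
      simp only [Finset.mem_range] at hj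
      rw [mul_sub, qp_mul, show j + (N-1-j) = N-1 from by omega]
      ring
    rw [Finset.prod_congr rfl hfac, Finset.prod_mul_distrib]
    congr 1
    · simp only [qp]
      rw [← map_prod, Finset.prod_pow_eq_pow_sum, sum_range_T]
    · exact Finset.prod_range_reflect (fun t => qp t - X) N
  have half2 : (∏ j ∈ range N, (qp (N-1) + qp (N+j) * (-X)))
      = qp (2*T N) * ∏ i ∈ range N, (1 - qp (i+1) * X) := by
    have hfac : ∀ j ∈ range N, (qp (N-1) + qp (N+j) * (-X))
        = qp (N-1) * (1 - qp (j+1) * X) := by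
      intro j hj
      rw [mul_sub, mul_one, ← mul_assoc, qp_mul, show N-1 + (j+1) = N+j from by omega]
      ring
    rw [Finset.prod_congr rfl hfac, Finset.prod_mul_distrib, Finset.prod_const,
      Finset.card_range]
    congr 1
    simp only [qp]
    rw [← map_pow, ← pow_mul]
    congr 2
    have h2N := two_T (N-1)
    have h2 : N - 1 + 1 = N := by omega
    rw [h2] at h2N
    have h3 : (N-1)*N = N*(N-1) := Nat.mul_comm _ _
    omega
  have s2 : (∏ j ∈ range (2*N), (qp (N-1) + qp j * (-X)))
      = qp (3*T N) * ((∏ t ∈ range N, (qp t - X)) *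
        ∏ i ∈ range N, (1 - qp (i+1) * X)) := by
    rw [two_mul, Finset.prod_range_add, half1, half2]
    rw [show (qp (T N) * ∏ t ∈ range N, (qp t - X)) * (qp (2*T N) * ∏ i ∈ range N, (1 - qp (i+1) * X))
        = (qp (T N) * qp (2*T N)) * ((∏ t ∈ range N, (qp t - X)) * ∏ i ∈ range N, (1 - qp (i+1) * X))
        from by ring, qp_mul, show T N + 2*T N = 3*T N from by ring]
  -- RHS transform per term
  have s3 : ∀ k ∈ range (2*N+1),
      Cp (prodQ N) * (Cp (A (2*N) k) * (qp (N-1))^(2*N-k) * (-X)^k)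
        = qp (3*T N) * (Cp ((-1)^k * (X^(tau N k) * u k)) * X^k) := by
    intro k hk
    simp only [Finset.mem_range] at hk
    have hk' : k ≤ 2*N := by omega
    have hu1 := (hu k hk').1
    have e1 : (qp (N-1))^(2*N-k) = qp ((N-1)*(2*N-k)) := by
      simp only [qp]
      rw [← map_pow, ← pow_mul]
    have e2 : ((-X)^k : Polynomial (Polynomial ℤ)) = Cp ((-1)^k) * X^k := by
      have hnx : (-X : Polynomial (Polynomial ℤ)) = Cp (-1) * X := by
        simp only [Cp]
        rw [map_neg, map_one]
        ring
      rw [hnx, mul_pow]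
      congr 1
      simp only [Cp]
      rw [← map_pow]
    rw [e1, e2]
    simp only [Cp, qp]
    calc C (prodQ N) * (C (A (2*N) k) * C (X^((N-1)*(2*N-k))) * (C ((-1)^k) * X^k))
        = (C (prodQ N * A (2*N) k * X^((N-1)*(2*N-k)) * (-1)^k) : Polynomial (Polynomial ℤ)) * X^k := by
          rw [map_mul, map_mul, map_mul]; ring
      _ = C (X^(T k) * u k * X^((N-1)*(2*N-k)) * (-1)^k) * X^k := by rw [hu1]
      _ = C (X^(3*T N) * ((-1)^k * (X^(tau N k) * u k))) * X^k := by
          congr 2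
          rw [show (X:Polynomial ℤ)^(T k) * u k * X^((N-1)*(2*N-k)) * (-1)^k
              = (X^(T k) * X^((N-1)*(2*N-k))) * ((-1)^k * u k) from by ring,
            ← pow_add, expo N k hN1 hk', pow_add]
          ring
      _ = C (X^(3*T N)) * (C ((-1)^k * (X^(tau N k) * u k)) * X^k) := by
          rw [map_mul]; ring
  -- E1
  have E1 : Cp (prodQ N) * ((∏ t ∈ range N, (qp t - X)) * ∏ i ∈ range N, (1 - qp (i+1) * X))
      = ∑ k ∈ range (2*N+1), Cp ((-1)^k * (X^(tau N k) * u k)) * X^k := by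
    have hC : qp (3*T N) ≠ 0 := by
      simp only [qp]
      rw [ne_eq, Polynomial.C_eq_zero]
      exact pow_ne_zero _ X_ne_zero
    apply mul_left_cancel₀ hC
    calc qp (3*T N) * (Cp (prodQ N) * ((∏ t ∈ range N, (qp t - X)) *
          ∏ i ∈ range N, (1 - qp (i+1) * X)))
        = Cp (prodQ N) * (qp (3*T N) * ((∏ t ∈ range N, (qp t - X)) *
            ∏ i ∈ range N, (1 - qp (i+1) * X))) := by ring
      _ = Cp (prodQ N) * ∏ j ∈ range (2*N), (qp (N-1) + qp j * (-X)) := by rw [← s2]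
      _ = Cp (prodQ N) * ∑ k ∈ range (2*N+1), Cp (A (2*N) k) * (qp (N-1))^(2*N-k) * (-X)^k := by
          rw [s1]
      _ = ∑ k ∈ range (2*N+1), Cp (prodQ N) * (Cp (A (2*N) k) * (qp (N-1))^(2*N-k) * (-X)^k) := by
          rw [Finset.mul_sum]
      _ = ∑ k ∈ range (2*N+1), qp (3*T N) * (Cp ((-1)^k * (X^(tau N k) * u k)) * X^k) :=
          Finset.sum_congr rfl s3
      _ = _ := by rw [← Finset.mul_sum]
  -- derivative and evaluation at 1
  have E2 : -(prodQ N * (((-1)^(N-1) * prodQ (N-1)) * prodQ N))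
      = ∑ k ∈ range (2*N+1), (-1)^k * (X^(tau N k) * u k) * (k : Polynomial ℤ) := by
    have hsplit : (∏ t ∈ range N, (qp t - X))
        = (1 - X) * ∏ t ∈ Ico 1 N, (qp t - X) := by
      rw [Finset.range_eq_Ico, Finset.prod_eq_prod_Ico_succ_bot (show 0 < N from by omega)]
      simp [qp]
    rw [hsplit] at E1
    have hder := congrArg (fun p => Polynomial.eval 1 (Polynomial.derivative p)) E1
    have hL : Polynomial.eval 1 (Polynomial.derivative (Cp (prodQ N) *
        (((1 - X) * ∏ t ∈ Ico 1 N, (qp t - X)) * ∏ i ∈ range N, (1 - qp (i+1) * X))))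
        = -(prodQ N * (((-1)^(N-1) * prodQ (N-1)) * prodQ N)) := by
      rw [show Cp (prodQ N) * (((1 - X) * ∏ t ∈ Ico 1 N, (qp t - X)) *
            ∏ i ∈ range N, (1 - qp (i+1) * X))
          = Cp (prodQ N) * ((1 - X) * ((∏ t ∈ Ico 1 N, (qp t - X)) *
            ∏ i ∈ range N, (1 - qp (i+1) * X))) from by ring]
      simp only [Cp, qp]
      rw [Polynomial.derivative_C_mul, Polynomial.derivative_mul]
      have hd1 : Polynomial.derivative ((1 : Polynomial (Polynomial ℤ)) - X) = -1 := by
        rw [Polynomial.derivative_sub, Polynomial.derivative_one, Polynomial.derivative_X]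
        ring
      rw [hd1]
      simp only [Polynomial.eval_mul, Polynomial.eval_add, Polynomial.eval_C,
        Polynomial.eval_neg, Polynomial.eval_one, Polynomial.eval_sub, Polynomial.eval_X,
        Polynomial.eval_prod, Polynomial.eval_pow]
      have hP2 : (∏ i ∈ range N, ((1:Polynomial ℤ) - X^(i+1) * 1)) = prodQ N := by
        unfold prodQ
        apply Finset.prod_congr rfl
        intro i _
        ring
      have hP1 : (∏ t ∈ Ico 1 N, ((X:Polynomial ℤ)^t - 1)) = (-1)^(N-1) * prodQ (N-1) := by
        have h1 : ∀ t ∈ Ico 1 N, ((X:Polynomial ℤ)^t - 1) = (-1) * (1 - X^t) := by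
          intro t _
          ring
        rw [Finset.prod_congr rfl h1, Finset.prod_mul_distrib, Finset.prod_const, Nat.card_Ico]
        congr 1
        rw [Finset.prod_Ico_eq_prod_range]
        unfold prodQ
        apply Finset.prod_congr rfl
        intro i _
        rw [add_comm]
      rw [hP1, hP2]
      ring
    have hR : Polynomial.eval 1 (Polynomial.derivative
        (∑ k ∈ range (2*N+1), Cp ((-1)^k * (X^(tau N k) * u k)) * X^k))
        = ∑ k ∈ range (2*N+1), (-1)^k * (X^(tau N k) * u k) * (k : Polynomial ℤ) := by
      simp only [Cp]
      rw [map_sum, Polynomial.eval_finset_sum]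
      apply Finset.sum_congr rfl
      intro k _
      rw [Polynomial.derivative_C_mul_X_pow, Polynomial.eval_mul, Polynomial.eval_C,
        Polynomial.eval_pow, Polynomial.eval_X, one_pow, mul_one]
    rw [hL, hR] at hder
    exact hder
  -- rearrange signs
  have E3 : prodQ N ^ 2 * prodQ (N-1)
      = ∑ k ∈ range (2*N+1), (-1)^(N+k) * (X^(tau N k) * u k) * (k : Polynomial ℤ) := by
    have h := congrArg (fun p => (-1 : Polynomial ℤ)^N * p) E2
    rw [Finset.mul_sum] at h
    have hsgn : (-1 : Polynomial ℤ)^N * -(prodQ N * (((-1)^(N-1) * prodQ (N-1)) * prodQ N))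
        = prodQ N ^ 2 * prodQ (N-1) := by
      have hpw : (-1 : Polynomial ℤ)^N * (-1)^(N-1) = (-1)^(2*N-1) := by
        rw [← pow_add]
        congr 1
        omega
      have h2 : (-1 : Polynomial ℤ)^(2*N-1) = -1 := by
        rw [show 2*N-1 = 2*(N-1)+1 from by omega, pow_succ, pow_mul]
        norm_num
      calc (-1 : Polynomial ℤ)^N * -(prodQ N * (((-1)^(N-1) * prodQ (N-1)) * prodQ N))
          = -((-1 : Polynomial ℤ)^N * (-1)^(N-1)) * (prodQ (N-1) * (prodQ N * prodQ N)) := by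
            ring
        _ = -(-1 : Polynomial ℤ)^(2*N-1) * (prodQ (N-1) * (prodQ N * prodQ N)) := by rw [hpw]
        _ = prodQ N ^ 2 * prodQ (N-1) := by rw [h2]; ring
    rw [hsgn] at h
    rw [h]
    apply Finset.sum_congr rfl
    intro k _
    rw [pow_add]
    ring
  have hQsplit : prodQ N = prodQ (N-1) * (1 - X^N) := by
    rw [show N = (N-1) + 1 from by omega, prodQ_succ, show N - 1 + 1 = N from by omega]
  calc prodQ N ^ 3 = prodQ N ^ 2 * (prodQ (N-1) * (1 - X^N)) := by
        rw [← hQsplit]; ring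
    _ = (1 - X^N) * (prodQ N ^ 2 * prodQ (N-1)) := by ring
    _ = _ := by
        rw [E3]
        congr 1
        apply Finset.sum_congr rfl
        intro k _
        ring

lemma tau_bound (N k : ℕ) (h : k ≤ 2*N) : N ≤ tau N k + min (k+1) (2*N+1-k) := by
  rcases le_or_gt N k with h' | h'
  · rw [tau, if_pos h']
    have h1 := T_ge (k - N + 1)
    omega
  · rw [tau, if_neg (by omega)]
    have h1 := T_ge (N - k)
    omega

lemma coeff_X_pow_mul_zero (m e : ℕ) (p : Polynomial ℤ) (h : m < e) :
    ((X:Polynomial ℤ)^e * p).coeff m = 0 := by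
  rw [mul_comm, Polynomial.coeff_mul_X_pow']
  rw [if_neg (by omega)]

lemma key_coeff (m : ℕ) :
    ((prodQ (m+2))^3).coeff m
      = ∑ k ∈ range (2*(m+2)+1),
          (if tau (m+2) k = m then ((-1:ℤ)^(m+2+k) * (k:ℤ)) else 0) := by
  obtain ⟨u, hdvd, hid⟩ := main m
  rw [hid]
  set N := m + 2 with hNdef
  rw [sub_mul, one_mul, Polynomial.coeff_sub,
    coeff_X_pow_mul_zero m N _ (by omega), sub_zero, Polynomial.finset_sum_coeff]
  apply Finset.sum_congr rfl
  intro k hk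
  have hk2N : k ≤ 2*N := by simp only [Finset.mem_range] at hk; omega
  obtain ⟨w, hw⟩ := hdvd k hk
  have hbound : m < tau N k + min (k+1) (2*N+1-k) := by
    have := tau_bound N k hk2N
    omega
  have hu' : u k = 1 + X^(min (k+1) (2*N+1-k)) * w := by
    rw [← hw]; ring
  have expand : (-1:Polynomial ℤ)^(N+k) * (k:Polynomial ℤ) * (X^(tau N k) * u k)
      = C ((-1)^(N+k) * (k:ℤ)) * X^(tau N k)
        + C ((-1)^(N+k) * (k:ℤ)) * (X^(tau N k + min (k+1) (2*N+1-k)) * w) := by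
    rw [hu', map_mul, map_natCast, map_pow, map_neg, map_one, pow_add]
    ring
  rw [expand, Polynomial.coeff_add, Polynomial.coeff_C_mul, Polynomial.coeff_C_mul,
    coeff_X_pow_mul_zero m _ w hbound, mul_zero, add_zero, Polynomial.coeff_X_pow]
  rcases eq_or_ne (tau N k) m with h | h
  · rw [if_pos h.symm, if_pos h, mul_one]
  · rw [if_neg (fun hc => h hc.symm), if_neg h, mul_zero]

lemma coeff_tri (m K : ℕ) (hm : m = K*(K+1)/2) :
    ((prodQ (m+2))^3).coeff m = (-1:ℤ)^K * (2*(K:ℤ)+1) := by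
  have hmT : T (K+1) = m := by rw [T_eq]; omega
  rw [key_coeff]
  set N := m + 2 with hNdef
  have hKm : K ≤ m := by
    have := T_ge (K+1)
    omega
  have hne : N + K ≠ N - K - 1 := by omega
  have hsub : ({N + K, N - K - 1} : Finset ℕ) ⊆ range (2*N+1) := by
    intro x hx
    simp only [Finset.mem_insert, Finset.mem_singleton] at hx
    simp only [Finset.mem_range]
    omega
  rw [← Finset.sum_subset hsub ?hzero]
  case hzero =>
    intro x hx hxs
    simp only [Finset.mem_range] at hx
    simp only [Finset.mem_insert, Finset.mem_singleton, not_or] at hxs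
    rw [if_neg]
    intro habs
    rcases le_or_gt N x with h' | h'
    · rw [tau, if_pos h'] at habs
      have := T_inj (show 1 ≤ x - N + 1 by omega) (show 1 ≤ K + 1 by omega)
        (by rw [habs, hmT])
      omega
    · rw [tau, if_neg (by omega)] at habs
      have := T_inj (show 1 ≤ N - x by omega) (show 1 ≤ K + 1 by omega)
        (by rw [habs, hmT])
      omega
  rw [Finset.sum_pair hne]
  have ht1 : tau N (N + K) = m := by
    rw [tau, if_pos (by omega), show N + K - N + 1 = K + 1 by omega, hmT]
  have ht2 : tau N (N - K - 1) = m := by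
    rw [tau, if_neg (by omega), show N - (N - K - 1) = K + 1 by omega, hmT]
  rw [if_pos ht1, if_pos ht2]
  have hs1 : (-1:ℤ)^(N + (N + K)) = (-1)^K := by
    rw [show N + (N + K) = 2*N + K from by ring, pow_add, pow_mul]
    norm_num
  have hs2 : (-1:ℤ)^(N + (N - K - 1)) = (-1)^(K+1) := by
    rw [show N + (N - K - 1) = 2*(N - K - 1) + (K + 1) from by omega, pow_add, pow_mul]
    norm_num
  rw [hs1, hs2]
  have hc1 : ((N + K : ℕ) : ℤ) = (N:ℤ) + K := by push_cast; ring
  have hc2 : ((N - K - 1 : ℕ) : ℤ) = (N:ℤ) - K - 1 := by omega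
  rw [hc1, hc2, pow_succ]
  ring

lemma coeff_nontri (m : ℕ) (h : ¬ ∃ K : ℕ, m = K*(K+1)/2) :
    ((prodQ (m+2))^3).coeff m = 0 := by
  rw [key_coeff]
  apply Finset.sum_eq_zero
  intro k hk
  rw [if_neg]
  intro habs
  set N := m + 2 with hNdef
  rcases le_or_gt N k with h' | h'
  · rw [tau, if_pos h'] at habs
    refine h ⟨k - N, ?_⟩
    rw [← T_eq]
    omega
  · rw [tau, if_neg (by omega)] at habs
    refine h ⟨N - k - 1, ?_⟩
    rw [← T_eq, show N - k - 1 + 1 = N - k from by omega]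
    omega

lemma coeff_cube_stable {m M1 M2 : ℕ} (h1 : m ≤ M1) (h2 : M1 ≤ M2) :
    ((prodQ M2)^3).coeff m = ((prodQ M1)^3).coeff m := by
  rw [prodQ_split h2]
  set R := ∏ i ∈ Ico M1 M2, ((1:Polynomial ℤ) - X^(i+1)) with hR
  have hdvd : (X:Polynomial ℤ)^(M1+1) ∣ R - 1 := by
    apply prod_sub_one_dvd
    intro e he
    simp only [Finset.mem_Ico] at he
    omega
  obtain ⟨w, hw⟩ := hdvd
  have hexp : (prodQ M1 * R)^3 = (prodQ M1)^3
      + X^(M1+1) * (w * (R^2 + R + 1) * (prodQ M1)^3) := by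
    linear_combination (R^2 + R + 1) * (prodQ M1)^3 * hw
  rw [hexp, Polynomial.coeff_add, coeff_X_pow_mul_zero m _ _ (by omega), add_zero]

lemma Icc_prod_eq (N0 : ℕ) :
    ∏ n ∈ Finset.Icc 1 N0, ((1:Polynomial ℤ) - X^n)^3 = (prodQ N0)^3 := by
  unfold prodQ
  rw [← Finset.prod_pow]
  rw [show Finset.Icc 1 N0 = Finset.Ico 1 (N0+1) from by rw [Finset.Ico_add_one_right_eq_Icc],
    Finset.prod_Ico_eq_prod_range]
  simp only [Nat.add_sub_cancel]
  apply Finset.prod_congr rfl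
  intro i _
  rw [add_comm]

end Jac

theorem jacobi_identity_coeff (N m : ℕ) (hm : m ≤ N) :
    (∀ k : ℕ, m = k * (k + 1) / 2 →
      (∏ n ∈ Finset.Icc 1 N, ((1 : Polynomial ℤ) - Polynomial.X ^ n) ^ 3).coeff m
        = (-1 : ℤ) ^ k * (2 * (k : ℤ) + 1)) ∧
    ((¬ ∃ k : ℕ, m = k * (k + 1) / 2) →
      (∏ n ∈ Finset.Icc 1 N, ((1 : Polynomial ℤ) - Polynomial.X ^ n) ^ 3).coeff m = 0) := by
  have key : (∏ n ∈ Finset.Icc 1 N, ((1 : Polynomial ℤ) - Polynomial.X ^ n) ^ 3).coeff m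
      = ((Jac.prodQ (m+2))^3).coeff m := by
    rw [Jac.Icc_prod_eq, Jac.coeff_cube_stable (le_refl m) hm,
      ← Jac.coeff_cube_stable (le_refl m) (show m ≤ m + 2 from by omega)]
  constructor
  · intro k hk
    rw [key, Jac.coeff_tri m k hk]
  · intro h
    rw [key, Jac.coeff_nontri m h]
end
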